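/- Let V be a finite-dimensional vector space over an algebraically closed field, ρ : G → GL(V) a group homomorphism, q a fixed nonzero scalar-valued function |·| : G → k× (a group homomorphism), and N : V → V a linear map satisfying |g|·(N ∘ ρ(g)) = ρ(g) ∘ N for all g ∈ G with |g| ≠ 1 for some g. If |g₀| is not a root of unity for some g₀ ∈ G, then N is nilpotent. -/

import Mathlib

open Module Polynomial

/-- Weil–Deligne nilpotency: let `V` be finite-dimensional over an algebraically
closed field `K`, `ρ : G →* GL(V)` a representation, `χ : G →* Kˣ` a character
(`|·|`), and `N : V →ₗ V` with `|g| • (N ∘ ρ(g)) = ρ(g) ∘ N` for all `g`.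
If `|g₀|` is not a root of unity for some `g₀`, then `N` is nilpotent. -/
theorem weil_deligne_N_nilpotent (K : Type*) [Field K] [IsAlgClosed K]
    (V : Type*) [AddCommGroup V] [Module K V] [FiniteDimensional K V]
    (G : Type*) [Group G]
    (ρ : G →* (V →ₗ[K] V)ˣ) (χ : G →* Kˣ) (N : V →ₗ[K] V)
    (hrel : ∀ g : G, (χ g : K) • (N ∘ₗ (ρ g : V →ₗ[K] V)) = (ρ g : V →ₗ[K] V) ∘ₗ N)
    (g₀ : G) (hg₀ : ∀ n : ℕ, 0 < n → (χ g₀ : K) ^ n ≠ 1) :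
    IsNilpotent N := by
  by_contra hN
  -- N has a nonzero eigenvalue
  set Nend : Module.End K V := N with hNend
  have hmonic : (minpoly K Nend).Monic := minpoly.monic (Algebra.IsIntegral.isIntegral _)
  have hsplit : (minpoly K Nend).Splits := IsAlgClosed.splits _
  have hprod := hsplit.eq_prod_roots_of_monic hmonic
  have hroot : ∃ μ : K, μ ≠ 0 ∧ (minpoly K Nend).IsRoot μ := by
    by_contra h
    push_neg at h
    have hall : ∀ μ ∈ (minpoly K Nend).roots, μ = 0 := by
      intro μ hμ
      by_contra hμ0
      exact h μ hμ0 (Polynomial.isRoot_of_mem_roots hμ)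
    have heq : minpoly K Nend = X ^ (minpoly K Nend).roots.card := by
      conv_lhs => rw [hprod]
      rw [Multiset.map_congr rfl (fun μ hμ => show X - C μ = X by rw [hall μ hμ, map_zero, sub_zero])]
      simp [Multiset.map_const', Multiset.prod_replicate]
    apply hN
    refine ⟨(minpoly K Nend).roots.card, ?_⟩
    have h2 := minpoly.aeval K Nend
    rw [heq] at h2
    simpa using h2
  obtain ⟨μ, hμ0, hμroot⟩ := hroot
  have hev : Nend.HasEigenvalue μ := Module.End.hasEigenvalue_of_isRoot hμroot
  -- the relation propagates eigenvalues
  have key : ∀ g : G, ∀ ν : K, Nend.HasEigenvalue ν →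
      Nend.HasEigenvalue ((χ g : K)⁻¹ * ν) := by
    intro g ν hν
    obtain ⟨v, hv, hv0⟩ := hν.exists_hasEigenvector
    rw [Module.End.mem_eigenspace_iff] at hv
    have hrelg := hrel g
    have happ := congrArg (fun f : V →ₗ[K] V => f v) hrelg
    simp only [LinearMap.smul_apply, LinearMap.comp_apply] at happ
    -- happ : (χ g : K) • N (ρ g v) = ρ g (N v)
    have hz : (χ g : K) ≠ 0 := (χ g).ne_zero
    refine Module.End.hasEigenvalue_of_hasEigenvector
      (x := (ρ g : V →ₗ[K] V) v) ⟨?_, ?_⟩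
    · rw [Module.End.mem_eigenspace_iff]
      have : Nend ((ρ g : V →ₗ[K] V) v) = (χ g : K)⁻¹ • (ρ g : V →ₗ[K] V) (Nend v) := by
        rw [← happ, smul_smul, inv_mul_cancel₀ hz, one_smul]
      rw [this, hv, map_smul, smul_smul]
    · intro h
      apply hv0
      have h2 := congrArg (fun w => (((ρ g)⁻¹ : (V →ₗ[K] V)ˣ) : V →ₗ[K] V) w) h
      simp only [map_zero] at h2
      rw [← h2, ← LinearMap.comp_apply]
      show v = ((((ρ g)⁻¹ : (V →ₗ[K] V)ˣ) : V →ₗ[K] V) * ((ρ g : (V →ₗ[K] V)ˣ) : V →ₗ[K] V)) v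
      rw [← Units.val_mul, inv_mul_cancel]
      simp
  -- infinitely many eigenvalues
  have hevn : ∀ n : ℕ, Nend.HasEigenvalue (((χ g₀ : K)⁻¹) ^ n * μ) := by
    intro n
    induction n with
    | zero => simpa using hev
    | succ n ih =>
      have := key g₀ _ ih
      convert this using 1
      ring
  have hinj : Function.Injective (fun n : ℕ => ((χ g₀ : K)⁻¹) ^ n * μ) := by
    intro m n hmn
    by_contra hne
    wlog hlt : m < n generalizing m n
    · exact this hmn.symm (Ne.symm hne) (by omega)
    have hz : (χ g₀ : K) ≠ 0 := (χ g₀).ne_zero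
    have hzi : (χ g₀ : K)⁻¹ ≠ 0 := inv_ne_zero hz
    simp only at hmn
    have : ((χ g₀ : K)⁻¹) ^ m = ((χ g₀ : K)⁻¹) ^ n := by
      exact mul_right_cancel₀ hμ0 hmn
    have h1 : ((χ g₀ : K)⁻¹) ^ m * ((χ g₀ : K)) ^ n = 1 := by
      rw [this, ← mul_pow, inv_mul_cancel₀ hz, one_pow]
    have h2 : (χ g₀ : K) ^ (n - m) = 1 := by
      have hm : ((χ g₀ : K)) ^ n = ((χ g₀ : K)) ^ m * ((χ g₀ : K)) ^ (n - m) := by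
        rw [← pow_add]; congr 1; omega
      rw [hm, ← mul_assoc, ← mul_pow, inv_mul_cancel₀ hz, one_pow, one_mul] at h1
      exact h1
    exact hg₀ (n - m) (by omega) h2
  have hfin := Nend.finite_hasEigenvalue
  exact (Set.infinite_of_injective_forall_mem hinj (fun n => hevn n)) hfin
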